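/- Let m, r, n be integers with 0 < r < m and n ≥ 1, let k be a real number, and set z_n = 2π n²/(4m) = π n²/(2m). Consider the function f(z) = (e^{iπ/4}/2) · (π z)^{−1/2} · sin((m − r)·(2π z/m)^{1/2}) / sin(m·(2π z/m)^{1/2}) · e^{−i k z}, where all square roots are principal branches (well defined for z in a punctured neighborhood of z_n inside ℂ ∖ (−∞, 0]). Then lim_{z → z_n, z ≠ z_n} (z − z_n) · f(z) = −(e^{iπ/4}/(π √(2m))) · sin(r π n/m) · e^{−2πi k n²/(4m)}; in particular f has at worst a simple pole at z_n with this residue. -/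

import Mathlib

open Complex Topology Filter

private lemma algebra_key (ε mC nC sC pC P S E : ℂ) (_hε2 : ε * ε = 1) (hs2 : sC^2 = 2*mC)
    (hm : mC ≠ 0) (hn : nC ≠ 0) (hs : sC ≠ 0) (hp : pC ≠ 0) (hε : ε ≠ 0) :
    (ε * mC / nC)⁻¹ * (P/2 * (pC * nC / sC)⁻¹ * (-ε * S) * E) = -(P/(pC*sC)) * S * E := by
  field_simp
  linear_combination (-(P*S*E))*hs2

private lemma cpowHalf (w : ℝ) (hw : 0 ≤ w) : (((w^2 : ℝ)) : ℂ) ^ ((1:ℂ)/2) = (w : ℂ) := by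
  rw [show ((1:ℂ)/2) = ((1/2 : ℝ) : ℂ) by push_cast; ring, ← Complex.ofReal_cpow (by positivity),
    ← Real.rpow_natCast w 2, ← Real.rpow_mul hw]
  norm_num

private lemma cpowHalfSubOne (w : ℝ) (hw : 0 < w) :
    (((w^2 : ℝ)) : ℂ) ^ ((1:ℂ)/2 - 1) = (w : ℂ)⁻¹ := by
  rw [show ((1:ℂ)/2 - 1) = ((-(1/2) : ℝ) : ℂ) by push_cast; ring,
    ← Complex.ofReal_cpow (by positivity), ← Real.rpow_natCast w 2, ← Real.rpow_mul hw.le]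
  norm_num [Real.rpow_neg_one]

private lemma cpowNegHalf (w : ℝ) (hw : 0 < w) :
    (((w^2 : ℝ)) : ℂ) ^ (-((1:ℂ)/2)) = (w : ℂ)⁻¹ := by
  rw [show (-((1:ℂ)/2)) = ((-(1/2) : ℝ) : ℂ) by push_cast; ring,
    ← Complex.ofReal_cpow (by positivity), ← Real.rpow_natCast w 2, ← Real.rpow_mul hw.le]
  norm_num [Real.rpow_neg_one]

private lemma cosIntPi (n : ℤ) : Complex.cos ((n:ℂ) * (Real.pi : ℂ)) = (-1)^n := by
  have h := Real.cos_int_mul_pi_sub 0 n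
  simp at h
  rw [show ((n:ℂ) * (Real.pi:ℂ)) = (((n * Real.pi : ℝ)) : ℂ) by push_cast; ring,
    ← Complex.ofReal_cos, h]
  push_cast
  ring

private noncomputable def Gfun (m : ℤ) : ℂ → ℂ := fun z =>
  Complex.sin ((m:ℂ) * ((2*(Real.pi:ℂ)*z/(m:ℂ)) ^ ((1:ℂ)/2)))

private noncomputable def Hfun (m r : ℤ) (k : ℝ) : ℂ → ℂ := fun z =>
  Complex.exp ((Real.pi:ℂ)*Complex.I/4)/2 * ((Real.pi:ℂ)*z)^(-(1/2:ℂ)) *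
    Complex.sin (((m:ℂ)-(r:ℂ)) * ((2*(Real.pi:ℂ)*z/(m:ℂ))^((1:ℂ)/2))) *
    Complex.exp (-Complex.I*(k:ℂ)*z)

/-- residue of the Borel transform of `(1/√k)Ψ_{m,r}(1/k)` at the
pole `z_n = 2πn²/(4m)`; the residue is (up to normalization) the S-matrix entry
`−i/√(2m)·sin(rnπ/m)` times the non-perturbative exponential `e^{−2πik n²/4m}`. -/
theorem borel_transform_residue (m r n : ℤ) (hr : 0 < r) (hrm : r < m)
    (hn : 1 ≤ n) (k : ℝ) :
    Tendsto
      (fun z : ℂ =>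
        (z - ((Real.pi * (n : ℝ) ^ 2 / (2 * (m : ℝ)) : ℝ) : ℂ)) *
          ((Complex.exp ((Real.pi : ℂ) * Complex.I / 4) / 2) *
            ((Real.pi : ℂ) * z) ^ (-(1 / 2 : ℂ)) *
            (Complex.sin (((m : ℂ) - (r : ℂ)) *
                ((2 * (Real.pi : ℂ) * z / (m : ℂ)) ^ ((1 : ℂ) / 2))) /
              Complex.sin ((m : ℂ) *
                ((2 * (Real.pi : ℂ) * z / (m : ℂ)) ^ ((1 : ℂ) / 2)))) *
            Complex.exp (-Complex.I * (k : ℂ) * z)))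
      (𝓝[≠] (((Real.pi * (n : ℝ) ^ 2 / (2 * (m : ℝ)) : ℝ) : ℂ)))
      (𝓝 (-(Complex.exp ((Real.pi : ℂ) * Complex.I / 4) /
              ((Real.pi : ℂ) * (Real.sqrt (2 * (m : ℝ)) : ℂ))) *
            Complex.sin ((r : ℂ) * (Real.pi : ℂ) * (n : ℂ) / (m : ℂ)) *
            Complex.exp (-(2 * (Real.pi : ℂ) * Complex.I * (k : ℂ) * (n : ℂ) ^ 2 /
              (4 * (m : ℂ)))))) := by
  have hm : (0:ℤ) < m := hr.trans hrm
  have hmR : (0:ℝ) < (m:ℝ) := by exact_mod_cast hm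
  have hnR : (0:ℝ) < (n:ℝ) := by exact_mod_cast (hn.trans_lt' (by norm_num) : (0:ℤ) < n)
  have hπ : (0:ℝ) < Real.pi := Real.pi_pos
  set aR : ℝ := Real.pi * (n : ℝ) ^ 2 / (2 * (m : ℝ)) with haR
  have haR0 : 0 < aR := by positivity
  set a : ℂ := ((aR : ℝ) : ℂ) with ha
  set wR : ℝ := Real.pi * (n:ℝ) / (m:ℝ) with hwR
  have hwR0 : 0 < wR := by positivity
  have hmC : ((m:ℝ) : ℂ) ≠ 0 := by exact_mod_cast hmR.ne'
  have hmC' : ((m:ℤ) : ℂ) ≠ 0 := by exact_mod_cast hmR.ne'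
  have hnC : ((n:ℤ) : ℂ) ≠ 0 := by exact_mod_cast hnR.ne'
  have hπC : ((Real.pi : ℝ) : ℂ) ≠ 0 := by exact_mod_cast hπ.ne'
  -- the base at the pole
  have key1 : 2*(Real.pi:ℂ)*a/((m:ℤ):ℂ) = ((wR^2 : ℝ) : ℂ) := by
    rw [ha, haR, hwR]
    push_cast
    field_simp
  have hbase : (2*(Real.pi:ℂ)*a/((m:ℤ):ℂ)) ^ ((1:ℂ)/2) = (wR : ℂ) := by
    rw [key1, cpowHalf wR hwR0.le]
  have hmw : ((m:ℤ):ℂ) * (wR:ℂ) = (n:ℂ) * (Real.pi:ℂ) := by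
    rw [hwR]; push_cast; field_simp
  have hcos : Complex.cos (((m:ℤ):ℂ) * (wR:ℂ)) = (-1)^n := by rw [hmw, cosIntPi]
  have hGa : Gfun m a = 0 := by
    simp only [Gfun]; rw [hbase, hmw, Complex.sin_int_mul_pi]
  -- derivative of G at a
  have h1 : HasDerivAt (fun z : ℂ => 2*(Real.pi:ℂ)*z/((m:ℤ):ℂ)) (2*(Real.pi:ℂ)/((m:ℤ):ℂ)) a := by
    simpa using ((hasDerivAt_id a).const_mul (2*(Real.pi:ℂ))).div_const ((m:ℤ):ℂ)
  have hslit : 2*(Real.pi:ℂ)*a/((m:ℤ):ℂ) ∈ Complex.slitPlane := by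
    rw [key1]; exact Complex.ofReal_mem_slitPlane.2 (by positivity)
  have h2 := (h1.cpow_const (c := (1:ℂ)/2) hslit).const_mul ((m:ℤ):ℂ)
  have h4 := h2.csin
  have hDval : Complex.cos (((m:ℤ):ℂ) * (2*(Real.pi:ℂ)*a/((m:ℤ):ℂ)) ^ ((1:ℂ)/2)) *
      (((m:ℤ):ℂ) * ((1:ℂ)/2 * (2*(Real.pi:ℂ)*a/((m:ℤ):ℂ)) ^ ((1:ℂ)/2 - 1) *
        (2*(Real.pi:ℂ)/((m:ℤ):ℂ)))) = (-1:ℂ)^n * ((m:ℤ):ℂ) / ((n:ℤ):ℂ) := by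
    rw [hbase, hcos, key1, cpowHalfSubOne wR hwR0]
    have hwc : ((wR:ℝ):ℂ) = (Real.pi:ℂ) * ((n:ℤ):ℂ) / ((m:ℤ):ℂ) := by
      rw [hwR]; push_cast; ring
    rw [hwc]
    field_simp
  rw [hDval] at h4
  have hG : HasDerivAt (Gfun m) ((-1:ℂ)^n * ((m:ℤ):ℂ) / ((n:ℤ):ℂ)) a := h4
  -- slope tendsto
  have hε : ((-1:ℂ))^n ≠ 0 := zpow_ne_zero n (by norm_num)
  have hDne : ((-1:ℂ)^n * ((m:ℤ):ℂ) / ((n:ℤ):ℂ)) ≠ 0 :=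
    div_ne_zero (mul_ne_zero hε hmC') hnC
  have hslope := (hasDerivAt_iff_tendsto_slope.mp hG).inv₀ hDne
  have hquot : Tendsto (fun z : ℂ => (z - a) / Gfun m z) (𝓝[≠] a)
      (𝓝 (((-1:ℂ)^n * ((m:ℤ):ℂ) / ((n:ℤ):ℂ))⁻¹)) := by
    refine hslope.congr fun z => ?_
    rw [slope_def_field, hGa, sub_zero, inv_div]
  -- continuity of H at a
  have hπa : (Real.pi:ℂ) * a ∈ Complex.slitPlane := by
    rw [ha, show (Real.pi:ℂ) * ((aR:ℝ):ℂ) = (((Real.pi * aR : ℝ)):ℂ) by push_cast; ring]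
    exact Complex.ofReal_mem_slitPlane.2 (by positivity)
  have hHc : ContinuousAt (Hfun m r k) a := by
    unfold Hfun
    apply ContinuousAt.mul
    apply ContinuousAt.mul
    apply ContinuousAt.mul continuousAt_const
    · exact (continuousAt_const.mul continuousAt_id).cpow continuousAt_const hπa
    · exact Complex.continuous_sin.continuousAt.comp <| continuousAt_const.mul <|
        ((continuousAt_const.mul continuousAt_id).div_const _).cpow continuousAt_const hslit
    · exact Complex.continuous_exp.continuousAt.comp (by fun_prop)
  have hH : Tendsto (Hfun m r k) (𝓝[≠] a) (𝓝 (Hfun m r k a)) :=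
    hHc.continuousWithinAt.tendsto
  have hmain := hquot.mul hH
  -- identify the function
  have hfun : ∀ z : ℂ,
      (z - a) * ((Complex.exp ((Real.pi : ℂ) * Complex.I / 4) / 2) *
            ((Real.pi : ℂ) * z) ^ (-(1 / 2 : ℂ)) *
            (Complex.sin (((m : ℂ) - (r : ℂ)) *
                ((2 * (Real.pi : ℂ) * z / (m : ℂ)) ^ ((1 : ℂ) / 2))) /
              Complex.sin ((m : ℂ) *
                ((2 * (Real.pi : ℂ) * z / (m : ℂ)) ^ ((1 : ℂ) / 2)))) *
            Complex.exp (-Complex.I * (k : ℂ) * z)) =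
        (z - a) / Gfun m z * Hfun m r k z := by
    intro z
    rw [Gfun, Hfun]
    ring
  -- identify the value
  set s : ℝ := Real.sqrt (2 * (m:ℝ)) with hsdef
  have hs2 : s^2 = 2 * (m:ℝ) := Real.sq_sqrt (by positivity)
  have hs0 : 0 < s := Real.sqrt_pos.2 (by positivity)
  have hsC : ((s:ℝ):ℂ) ≠ 0 := by exact_mod_cast hs0.ne'
  have hPa : ((Real.pi:ℂ) * a) ^ (-(1/2 : ℂ)) = (((Real.pi * (n:ℝ) / s : ℝ)):ℂ)⁻¹ := by
    have h1 : (Real.pi:ℂ) * a = (((Real.pi * (n:ℝ) / s)^2 : ℝ) : ℂ) := by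
      rw [ha, haR]
      have : (Real.pi * (n:ℝ) / s)^2 = Real.pi^2 * (n:ℝ)^2 / (2*(m:ℝ)) := by
        rw [div_pow, hs2]; ring
      rw [this]; push_cast; field_simp
    rw [h1, show (-(1/2 : ℂ)) = -((1:ℂ)/2) by ring, cpowNegHalf _ (by positivity)]
  have hsin : Complex.sin ((((m:ℤ):ℂ) - ((r:ℤ):ℂ)) * (wR:ℂ)) =
      -((-1:ℂ)^n) * Complex.sin (((r:ℤ):ℂ) * (Real.pi:ℂ) * ((n:ℤ):ℂ) / ((m:ℤ):ℂ)) := by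
    have harg : (((m:ℤ):ℂ) - ((r:ℤ):ℂ)) * (wR:ℂ) =
        ((n:ℤ):ℂ) * (Real.pi:ℂ) - ((r:ℤ):ℂ) * (Real.pi:ℂ) * ((n:ℤ):ℂ) / ((m:ℤ):ℂ) := by
      rw [hwR]; push_cast; field_simp
    rw [harg, Complex.sin_sub, Complex.sin_int_mul_pi, cosIntPi]
    ring
  have hexp : Complex.exp (-Complex.I * (k:ℂ) * a) =
      Complex.exp (-(2 * (Real.pi : ℂ) * Complex.I * (k : ℂ) * ((n:ℤ) : ℂ) ^ 2 /
        (4 * ((m:ℤ) : ℂ)))) := by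
    congr 1
    rw [ha, haR]; push_cast; field_simp; ring
  have hHa : Hfun m r k a =
      Complex.exp ((Real.pi:ℂ)*Complex.I/4)/2 * (((Real.pi * (n:ℝ) / s : ℝ)):ℂ)⁻¹ *
        (-((-1:ℂ)^n) * Complex.sin (((r:ℤ):ℂ) * (Real.pi:ℂ) * ((n:ℤ):ℂ) / ((m:ℤ):ℂ))) *
        Complex.exp (-(2 * (Real.pi : ℂ) * Complex.I * (k : ℂ) * ((n:ℤ) : ℂ) ^ 2 /
          (4 * ((m:ℤ) : ℂ)))) := by
    simp only [Hfun]
    rw [hbase, hPa, hsin, hexp]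
  have hε2 : ((-1:ℂ))^n * ((-1:ℂ))^n = 1 := by
    rw [← zpow_add₀ (by norm_num : (-1:ℂ) ≠ 0), show n + n = 2 * n by ring, zpow_mul]
    norm_num
  have hs2C : ((s:ℝ):ℂ)^2 = 2 * ((m:ℤ):ℂ) := by exact_mod_cast congrArg (Complex.ofReal) hs2
  have hval : ((-1:ℂ)^n * ((m:ℤ):ℂ) / ((n:ℤ):ℂ))⁻¹ * Hfun m r k a =
      -(Complex.exp ((Real.pi : ℂ) * Complex.I / 4) /
              ((Real.pi : ℂ) * ((s:ℝ) : ℂ))) *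
            Complex.sin ((r : ℂ) * (Real.pi : ℂ) * (n : ℂ) / (m : ℂ)) *
            Complex.exp (-(2 * (Real.pi : ℂ) * Complex.I * (k : ℂ) * (n : ℂ) ^ 2 /
              (4 * (m : ℂ)))) := by
    rw [hHa, show (((Real.pi * (n:ℝ) / s : ℝ)):ℂ) = (Real.pi:ℂ) * ((n:ℤ):ℂ) / ((s:ℝ):ℂ) by
      push_cast; ring]
    exact algebra_key _ _ _ _ _ _ _ _ hε2 hs2C hmC' hnC hsC hπC hε
  have hfinal := hmain.congr fun z => (hfun z).symm
  rw [hval] at hfinal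
  exact hfinal
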